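/- Let (E, 𝓔) be a measurable space with σ-finite measure m, and let π, μ : E → ℝ be probability densities with respect to m (nonnegative, integrating to 1) such that π(x) > 0, μ(x) > 0, and π(x) ≤ M·μ(x) for all x ∈ E, for some constant M > 0. On a probability space let X be a random element of E whose law has density μ with respect to m, and let ξ₁, ξ₂ be independent standard exponential (rate 1) random variables, independent of X. Then for every measurable B ⊆ E, P( (M·μ(X)/π(X) − 1)·ξ₁ < ξ₂ and X ∈ B ) = (1/M) ∫_B π dm. In particular P( (Mμ(X)/π(X) − 1)ξ₁ < ξ₂ ) = 1/M, and the conditional distribution of X given the event { (Mμ(X)/π(X) − 1)ξ₁ < ξ₂ } has density π with respect to m. -/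

import Mathlib

open MeasureTheory ProbabilityTheory

lemma expMeasure_Ioi {y : ℝ} (hy : 0 ≤ y) :
    expMeasure 1 (Set.Ioi y) = ENNReal.ofReal (Real.exp (-y)) := by
  have h1 : IsProbabilityMeasure (expMeasure 1) := isProbabilityMeasure_expMeasure one_pos
  have hIic : expMeasure 1 (Set.Iic y) = ENNReal.ofReal (1 - Real.exp (-y)) := by
    have h2 : expMeasure 1 (Set.Iic y) = ∫⁻ x in Set.Iic y, exponentialPDF 1 x := by
      rw [show expMeasure 1 = volume.withDensity (exponentialPDF 1) from rfl,
        withDensity_apply _ measurableSet_Iic]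
    rw [h2, lintegral_exponentialPDF_eq_antiDeriv one_pos, if_pos hy, one_mul]
  have hcompl := measure_compl (μ := expMeasure 1) (measurableSet_Iic (a := y))
    (measure_ne_top _ _)
  rw [Set.compl_Iic] at hcompl
  have hle : Real.exp (-y) ≤ 1 := Real.exp_le_one_iff.2 (by linarith)
  rw [hcompl, hIic, measure_univ, ← ENNReal.ofReal_one,
    ← ENNReal.ofReal_sub _ (by linarith)]
  norm_num

lemma measurable_exponentialPDF (r : ℝ) : Measurable (exponentialPDF r) :=
  ENNReal.measurable_ofReal.comp (measurable_exponentialPDFReal r)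

lemma expProd_lt {a : ℝ} (ha : 0 ≤ a) :
    ((expMeasure 1).prod (expMeasure 1)) {p : ℝ × ℝ | a * p.1 < p.2}
      = ENNReal.ofReal (1 + a)⁻¹ := by
  have h1 : IsProbabilityMeasure (expMeasure 1) := isProbabilityMeasure_expMeasure one_pos
  have hmeas : MeasurableSet {p : ℝ × ℝ | a * p.1 < p.2} :=
    measurableSet_lt (measurable_fst.const_mul a) measurable_snd
  have h1a : (0:ℝ) < 1 + a := by linarith
  rw [Measure.prod_apply hmeas]
  have hslice : ∀ s : ℝ, (Prod.mk s ⁻¹' {p : ℝ × ℝ | a * p.1 < p.2}) = Set.Ioi (a * s) := by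
    intro s; rfl
  simp_rw [hslice]
  have hfmeas : Measurable fun s : ℝ => expMeasure 1 (Set.Ioi (a * s)) := by
    have := measurable_measure_prodMk_left (ν := expMeasure 1) hmeas
    simpa [hslice] using this
  have hwd : ∀ f : ℝ → ENNReal, Measurable f →
      ∫⁻ s, f s ∂(expMeasure 1) = ∫⁻ s, exponentialPDF 1 s * f s :=
    fun f hf => lintegral_withDensity_eq_lintegral_mul volume (measurable_exponentialPDF 1) hf
  rw [hwd _ hfmeas]
  have hpt : ∀ s : ℝ, exponentialPDF 1 s * expMeasure 1 (Set.Ioi (a * s))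
      = ENNReal.ofReal (1 + a)⁻¹ * exponentialPDF (1 + a) s := by
    intro s
    rcases lt_or_ge s 0 with hs | hs
    · rw [exponentialPDF_of_neg hs, exponentialPDF_of_neg hs, zero_mul, mul_zero]
    · have has : 0 ≤ a * s := mul_nonneg ha hs
      rw [exponentialPDF_of_nonneg hs, exponentialPDF_of_nonneg hs,
        expMeasure_Ioi has, ← ENNReal.ofReal_mul (by positivity),
        ← ENNReal.ofReal_mul (by positivity)]
      congr 1
      rw [one_mul, ← Real.exp_add, ← mul_assoc, inv_mul_cancel₀ h1a.ne']
      ring_nf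
  simp_rw [hpt]
  rw [lintegral_const_mul _ (measurable_exponentialPDF (1 + a)),
    lintegral_exponentialPDF_eq_one h1a, mul_one]

/-- **Probabilistic core of Theorem 4.5 (rejection sampling as Restore-CFTP).**
Let `π, μ` be probability densities w.r.t. `m` with `π, μ > 0` and `π ≤ M μ`.  Let `X` have
density `μ`, and let `ξ₁, ξ₂` be independent rate-1 exponential variables, independent of `X`
(expressed through the joint law of `(X, ξ₁, ξ₂)`).  Then for every measurable `B`,
`P((Mμ(X)/π(X) - 1)ξ₁ < ξ₂ and X ∈ B) = M⁻¹ ∫_B π dm`; in particular the acceptance event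
has probability `M⁻¹`, and conditionally on it `X` has density `π` w.r.t. `m`. -/
theorem rejection_sampler_is_restore_cftp
    {E : Type*} [MeasurableSpace E] (m : Measure E) [SigmaFinite m]
    (π μ : E → ℝ) (hπmeas : Measurable π) (hμmeas : Measurable μ)
    (hπpos : ∀ x, 0 < π x) (hμpos : ∀ x, 0 < μ x)
    (hπnorm : ∫ x, π x ∂m = 1) (hμnorm : ∫ x, μ x ∂m = 1)
    (M : ℝ) (hM : 0 < M) (hdom : ∀ x, π x ≤ M * μ x)
    {Ω : Type*} [MeasurableSpace Ω] (P : Measure Ω) [IsProbabilityMeasure P]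
    (X : Ω → E) (hX : Measurable X)
    (ξ₁ ξ₂ : Ω → ℝ) (hξ₁ : Measurable ξ₁) (hξ₂ : Measurable ξ₂)
    (hjoint : Measure.map (fun ω => (X ω, ξ₁ ω, ξ₂ ω)) P
      = (m.withDensity fun x => ENNReal.ofReal (μ x)).prod
          ((expMeasure 1).prod (expMeasure 1))) :
    (∀ B : Set E, MeasurableSet B →
      P {ω | (M * μ (X ω) / π (X ω) - 1) * ξ₁ ω < ξ₂ ω ∧ X ω ∈ B}
        = ENNReal.ofReal (M⁻¹ * ∫ x in B, π x ∂m)) ∧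
    P {ω | (M * μ (X ω) / π (X ω) - 1) * ξ₁ ω < ξ₂ ω} = ENNReal.ofReal M⁻¹ ∧
    Measure.map X (P[|{ω | (M * μ (X ω) / π (X ω) - 1) * ξ₁ ω < ξ₂ ω}])
      = m.withDensity fun x => ENNReal.ofReal (π x) := by
  -- basic facts
  haveI : IsProbabilityMeasure (expMeasure 1) := isProbabilityMeasure_expMeasure one_pos
  have hc : ∀ x, 0 ≤ M * μ x / π x - 1 := by
    intro x
    have : 1 ≤ M * μ x / π x := (one_le_div (hπpos x)).2 (hdom x)
    linarith
  have hπint : Integrable π m := by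
    by_contra h
    rw [integral_undef h] at hπnorm
    exact one_ne_zero hπnorm.symm
  have hlint : ∀ B : Set E, ∫⁻ x in B, ENNReal.ofReal (π x) ∂m
      = ENNReal.ofReal (∫ x in B, π x ∂m) :=
    fun B => (ofReal_integral_eq_lintegral_ofReal hπint.integrableOn
      (ae_of_all _ fun x => (hπpos x).le)).symm
  -- the key computation
  have key : ∀ B : Set E, MeasurableSet B →
      P {ω | (M * μ (X ω) / π (X ω) - 1) * ξ₁ ω < ξ₂ ω ∧ X ω ∈ B}
        = ENNReal.ofReal (M⁻¹ * ∫ x in B, π x ∂m) := by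
    intro B hB
    set S : Set (E × ℝ × ℝ) :=
      {p | (M * μ p.1 / π p.1 - 1) * p.2.1 < p.2.2 ∧ p.1 ∈ B} with hSdef
    have hf : Measurable fun p : E × ℝ × ℝ => (M * μ p.1 / π p.1 - 1) * p.2.1 :=
      ((((hμmeas.comp measurable_fst).const_mul M).div
        (hπmeas.comp measurable_fst)).sub measurable_const).mul
        (measurable_fst.comp measurable_snd)
    have hS : MeasurableSet S :=
      (measurableSet_lt hf (measurable_snd.comp measurable_snd)).inter
        (measurable_fst hB)
    have hpre : {ω | (M * μ (X ω) / π (X ω) - 1) * ξ₁ ω < ξ₂ ω ∧ X ω ∈ B}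
        = (fun ω => (X ω, ξ₁ ω, ξ₂ ω)) ⁻¹' S := rfl
    have htriple : Measurable fun ω => (X ω, ξ₁ ω, ξ₂ ω) :=
      hX.prodMk (hξ₁.prodMk hξ₂)
    rw [hpre, ← Measure.map_apply htriple hS, hjoint, Measure.prod_apply hS]
    have hslice : ∀ x : E,
        ((expMeasure 1).prod (expMeasure 1)) (Prod.mk x ⁻¹' S)
          = B.indicator (fun x => ENNReal.ofReal (M * μ x / π x)⁻¹) x := by
      intro x
      by_cases hx : x ∈ B
      · have : Prod.mk x ⁻¹' S = {q : ℝ × ℝ | (M * μ x / π x - 1) * q.1 < q.2} := by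
          ext q; simp [hSdef, hx]
        rw [this, expProd_lt (hc x), Set.indicator_of_mem hx]
        congr 2
        ring
      · have : Prod.mk x ⁻¹' S = ∅ := by
          ext q; simp [hSdef, hx]
        rw [this, measure_empty, Set.indicator_of_notMem hx]
    simp_rw [hslice]
    rw [lintegral_indicator hB _, restrict_withDensity hB,
      lintegral_withDensity_eq_lintegral_mul _ hμmeas.ennreal_ofReal
        (show Measurable fun x => ENNReal.ofReal (M * μ x / π x)⁻¹ from
          ((hμmeas.const_mul M).div hπmeas).inv.ennreal_ofReal)]
    have hpt : ∀ x : E, ((fun x => ENNReal.ofReal (μ x)) *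
        fun x => ENNReal.ofReal (M * μ x / π x)⁻¹) x
        = ENNReal.ofReal M⁻¹ * ENNReal.ofReal (π x) := by
      intro x
      have hμ0 : μ x ≠ 0 := (hμpos x).ne'
      have hπ0 : π x ≠ 0 := (hπpos x).ne'
      rw [Pi.mul_apply, ← ENNReal.ofReal_mul (hμpos x).le,
        ← ENNReal.ofReal_mul (by positivity)]
      congr 1
      field_simp
    rw [lintegral_congr hpt]
    rw [lintegral_const_mul _ hπmeas.ennreal_ofReal, hlint B,
      ← ENNReal.ofReal_mul (by positivity)]
  refine ⟨key, ?_, ?_⟩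
  · have huniv := key Set.univ MeasurableSet.univ
    simp only [Set.mem_univ, and_true, Measure.restrict_univ, hπnorm, mul_one] at huniv
    exact huniv
  · -- conditional law
    set A : Set Ω := {ω | (M * μ (X ω) / π (X ω) - 1) * ξ₁ ω < ξ₂ ω} with hAdef
    have hA : MeasurableSet A :=
      measurableSet_lt (((((hμmeas.comp hX).const_mul M).div (hπmeas.comp hX)).sub
        measurable_const).mul hξ₁) hξ₂
    have hPA : P A = ENNReal.ofReal M⁻¹ := by
      have huniv := key Set.univ MeasurableSet.univ
      simp only [Set.mem_univ, and_true, Measure.restrict_univ, hπnorm, mul_one] at huniv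
      exact huniv
    ext C hC
    rw [Measure.map_apply hX hC, cond_apply hA, withDensity_apply _ hC, hlint C]
    have hAC : A ∩ X ⁻¹' C = {ω | (M * μ (X ω) / π (X ω) - 1) * ξ₁ ω < ξ₂ ω ∧ X ω ∈ C} := rfl
    rw [hAC, key C hC, hPA, ENNReal.ofReal_inv_of_pos hM, inv_inv,
      ← ENNReal.ofReal_mul hM.le]
    congr 1
    field_simp
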